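/- Main theorem (reduction to elementary MACs): the channel capacity C of an N-user (n₁,...,n_N;m)-MAC (P,X) equals the maximum over F in the elementary face set Φ_N^(m) of the channel capacity C(F) of the restricted MAC (P,F); i.e., C = max_{F ∈ Φ_N^(m)} C(F). In particular, some optimal input distribution is supported, for each user k with n_k ≥ m, on at most m input symbols. -/

import Mathlib

open Real Finset

/-- Output distribution of an N-user MAC. -/
noncomputable def outDist {N m : ℕ} {n : Fin N → ℕ}
    (P : (∀ k, Fin (n k)) → Fin m → ℝ) (p : ∀ k, Fin (n k) → ℝ) (j : Fin m) : ℝ :=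
  ∑ i : ∀ k, Fin (n k), (∏ k, p k (i k)) * P i j

/-- Mutual information of an N-user MAC. -/
noncomputable def mutualInfo {N m : ℕ} {n : Fin N → ℕ}
    (P : (∀ k, Fin (n k)) → Fin m → ℝ) (p : ∀ k, Fin (n k) → ℝ) : ℝ :=
  ∑ j : Fin m, ∑ i : ∀ k, Fin (n k),
    (∏ k, p k (i k)) * P i j * Real.log (P i j / outDist P p j)

/-- The Kuhn-Tucker functional `J(p; i_k)` of user `k`, symbol `a`. -/
noncomputable def Jfun {N m : ℕ} {n : Fin N → ℕ}
    (P : (∀ k, Fin (n k)) → Fin m → ℝ) (p : ∀ k, Fin (n k) → ℝ)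
    (k : Fin N) (a : Fin (n k)) : ℝ :=
  ∑ j : Fin m, ∑ i : ∀ l, Fin (n l),
    if i k = a then
      (∏ l ∈ Finset.univ.erase k, p l (i l)) * P i j * Real.log (P i j / outDist P p j)
    else 0

/-- A (row-)stochastic channel matrix. -/
def IsChannel {N m : ℕ} {n : Fin N → ℕ} (P : (∀ k, Fin (n k)) → Fin m → ℝ) : Prop :=
  ∀ i, (∀ j, 0 ≤ P i j) ∧ ∑ j, P i j = 1

/-- Domain of product input distributions: each user's distribution lies in its simplex. -/
def macDomain (N : ℕ) (n : Fin N → ℕ) : Set (∀ k, Fin (n k) → ℝ) :=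
  {p | ∀ k, p k ∈ stdSimplex ℝ (Fin (n k))}

section Helpers

variable {N m : ℕ} {n : Fin N → ℕ}

lemma sum_pi_prod (f : ∀ k, Fin (n k) → ℝ) :
    ∑ i : ∀ k, Fin (n k), ∏ k, f k (i k) = ∏ k, ∑ b, f k b := by
  rw [Finset.prod_univ_sum, Fintype.piFinset_univ]

lemma prod_update_eq (p : ∀ k, Fin (n k) → ℝ) (k : Fin N) (q : Fin (n k) → ℝ)
    (i : ∀ l, Fin (n l)) :
    (∏ l, Function.update p k q l (i l)) = q (i k) * ∏ l ∈ Finset.univ.erase k, p l (i l) := by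
  rw [← Finset.mul_prod_erase Finset.univ _ (Finset.mem_univ k), Function.update_self]
  congr 1
  exact Finset.prod_congr rfl fun l hl => by
    rw [Function.update_of_ne (Finset.ne_of_mem_erase hl)]

lemma sum_prod_update (p : ∀ k, Fin (n k) → ℝ) (k : Fin N) (q : Fin (n k) → ℝ)
    (h : (∀ l, Fin (n l)) → ℝ) :
    ∑ i : ∀ l, Fin (n l), (∏ l, Function.update p k q l (i l)) * h i
      = ∑ a, q a * ∑ i : ∀ l, Fin (n l),
          if i k = a then (∏ l ∈ Finset.univ.erase k, p l (i l)) * h i else 0 := by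
  have L : ∀ i : ∀ l, Fin (n l),
      (∏ l, Function.update p k q l (i l)) * h i
        = q (i k) * ((∏ l ∈ Finset.univ.erase k, p l (i l)) * h i) := fun i => by
    rw [prod_update_eq, mul_assoc]
  simp_rw [L, Finset.mul_sum]
  rw [Finset.sum_comm]
  refine Finset.sum_congr rfl fun i _ => ?_
  simp [mul_ite, Finset.sum_ite_eq]

/-- Coefficient matrix: the output distribution is linear in user `k`'s distribution. -/
noncomputable def coefA (P : (∀ k, Fin (n k)) → Fin m → ℝ) (p : ∀ k, Fin (n k) → ℝ)
    (k : Fin N) (a : Fin (n k)) (j : Fin m) : ℝ :=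
  ∑ i : ∀ l, Fin (n l),
    if i k = a then (∏ l ∈ Finset.univ.erase k, p l (i l)) * P i j else 0

lemma outDist_update (P : (∀ k, Fin (n k)) → Fin m → ℝ) (p : ∀ k, Fin (n k) → ℝ)
    (k : Fin N) (q : Fin (n k) → ℝ) (j : Fin m) :
    outDist P (Function.update p k q) j = ∑ a, q a * coefA P p k a j := by
  exact sum_prod_update p k q (fun i => P i j)

lemma sum_coefA (P : (∀ k, Fin (n k)) → Fin m → ℝ) (hP : IsChannel P)
    (p : ∀ k, Fin (n k) → ℝ) (hp : ∀ l, ∑ b, p l b = 1) (k : Fin N) (a : Fin (n k)) :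
    ∑ j, coefA P p k a j = 1 := by
  unfold coefA
  rw [Finset.sum_comm]
  have key : ∀ i : ∀ l, Fin (n l),
      (∑ j, if i k = a then (∏ l ∈ Finset.univ.erase k, p l (i l)) * P i j else 0)
        = ∏ l, Function.update p k (fun x => if x = a then (1:ℝ) else 0) l (i l) := by
    intro i
    rw [prod_update_eq]
    by_cases hia : i k = a
    · simp only [hia, if_true, ← Finset.mul_sum, (hP i).2, mul_one, one_mul]
    · simp [hia]
  simp_rw [key]
  rw [sum_pi_prod]
  apply Finset.prod_eq_one
  intro l _
  by_cases hl : l = k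
  · subst hl
    simp
  · rw [Function.update_of_ne hl]
    exact hp l

lemma mutualInfo_update (P : (∀ k, Fin (n k)) → Fin m → ℝ) (p : ∀ k, Fin (n k) → ℝ)
    (k : Fin N) (q : Fin (n k) → ℝ)
    (hout : ∀ j, outDist P (Function.update p k q) j = outDist P p j) :
    mutualInfo P (Function.update p k q) = ∑ a, q a * Jfun P p k a := by
  unfold mutualInfo Jfun
  simp_rw [hout]
  have key : ∀ j, ∑ i : ∀ l, Fin (n l),
      (∏ l, Function.update p k q l (i l)) * P i j * Real.log (P i j / outDist P p j)
        = ∑ a, q a * ∑ i : ∀ l, Fin (n l),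
            if i k = a then (∏ l ∈ Finset.univ.erase k, p l (i l)) * P i j
              * Real.log (P i j / outDist P p j) else 0 := by
    intro j
    have := sum_prod_update p k q
      (fun i => P i j * Real.log (P i j / outDist P p j))
    simpa [mul_assoc] using this
  simp_rw [key]
  rw [Finset.sum_comm]
  simp_rw [Finset.mul_sum]

lemma mutualInfo_eq_sum_Jfun (P : (∀ k, Fin (n k)) → Fin m → ℝ) (p : ∀ k, Fin (n k) → ℝ)
    (k : Fin N) :
    mutualInfo P p = ∑ a, p k a * Jfun P p k a := by
  have := mutualInfo_update P p k (p k) (fun j => by rw [Function.update_eq_self])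
  rwa [Function.update_eq_self] at this

end Helpers


lemma exists_kernel_vec {ν μ : ℕ} (A : Fin μ → Fin ν → ℝ) (s : Finset (Fin ν))
    (hs : μ < s.card) :
    ∃ d : Fin ν → ℝ, d ≠ 0 ∧ (∀ a ∉ s, d a = 0) ∧ ∀ j, ∑ a, d a * A j a = 0 := by
  classical
  let T : (↥s → ℝ) →ₗ[ℝ] (Fin μ → ℝ) :=
    { toFun := fun x j => ∑ a : ↥s, x a * A j a
      map_add' := fun x y => by
        funext j
        simp [add_mul, Finset.sum_add_distrib]
      map_smul' := fun r x => by
        funext j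
        simp [Finset.mul_sum, mul_assoc] }
  have hnotinj : ¬ Function.Injective T := by
    intro hinj
    have := LinearMap.finrank_le_finrank_of_injective hinj
    rw [Module.finrank_fintype_fun_eq_card, Module.finrank_fintype_fun_eq_card,
      Fintype.card_coe, Fintype.card_fin] at this
    omega
  have : ∃ x : ↥s → ℝ, x ≠ 0 ∧ T x = 0 := by
    rw [Function.not_injective_iff] at hnotinj
    obtain ⟨x, y, hxy, hne⟩ := hnotinj
    exact ⟨x - y, sub_ne_zero_of_ne hne, by rw [map_sub, hxy, sub_self]⟩
  obtain ⟨x, hx0, hxker⟩ := this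
  refine ⟨fun a => if h : a ∈ s then x ⟨a, h⟩ else 0, ?_, ?_, ?_⟩
  · intro hd
    apply hx0
    funext a
    have := congrFun hd (a : Fin ν)
    simpa [a.2] using this
  · intro a ha; simp [ha]
  · intro j
    have h1 : ∑ a, (if h : a ∈ s then x ⟨a, h⟩ else 0) * A j a
        = ∑ a ∈ s, (if h : a ∈ s then x ⟨a, h⟩ else 0) * A j a := by
      refine (Finset.sum_subset (Finset.subset_univ s) ?_).symm
      intro a _ ha; simp [ha]
    rw [h1]
    have h2 : ∑ a ∈ s, (if h : a ∈ s then x ⟨a, h⟩ else 0) * A j a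
        = ∑ a : ↥s, x a * A j a := by
      rw [← Finset.sum_coe_sort s]
      refine Finset.sum_congr rfl fun a _ => ?_
      simp [a.2]
    rw [h2]
    exact congrFun hxker j

section Cont
variable {N m : ℕ} {n : Fin N → ℕ}

noncomputable def gfun (P : (∀ k, Fin (n k)) → Fin m → ℝ) (p : ∀ k, Fin (n k) → ℝ) : ℝ :=
  (∑ i : ∀ k, Fin (n k), (∏ k, p k (i k)) * ∑ j, P i j * Real.log (P i j)) +
    ∑ j, Real.negMulLog (outDist P p j)

lemma continuous_prod_eval (i : ∀ k, Fin (n k)) :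
    Continuous fun p : ∀ k, Fin (n k) → ℝ => ∏ k, p k (i k) :=
  continuous_finset_prod _ fun k _ => (continuous_apply (i k)).comp (continuous_apply k)

lemma continuous_outDist (P : (∀ k, Fin (n k)) → Fin m → ℝ) (j : Fin m) :
    Continuous fun p => outDist P p j :=
  continuous_finset_sum _ fun i _ => (continuous_prod_eval i).mul continuous_const

lemma continuous_gfun (P : (∀ k, Fin (n k)) → Fin m → ℝ) : Continuous (gfun P) :=
  Continuous.add
    (continuous_finset_sum _ fun i _ => (continuous_prod_eval i).mul continuous_const)
    (continuous_finset_sum _ fun j _ =>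
      Real.continuous_negMulLog.comp (continuous_outDist P j))

lemma mutualInfo_eq_gfun (P : (∀ k, Fin (n k)) → Fin m → ℝ) (hP : IsChannel P)
    {p : ∀ k, Fin (n k) → ℝ} (hp : p ∈ macDomain N n) :
    mutualInfo P p = gfun P p := by
  unfold mutualInfo gfun
  have h1 : (∑ i : ∀ k, Fin (n k), (∏ k, p k (i k)) * ∑ j, P i j * Real.log (P i j))
      = ∑ j, ∑ i : ∀ k, Fin (n k), (∏ k, p k (i k)) * (P i j * Real.log (P i j)) := by
    rw [Finset.sum_comm]
    exact Finset.sum_congr rfl fun i _ => Finset.mul_sum _ _ _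
  rw [h1, ← Finset.sum_add_distrib]
  refine Finset.sum_congr rfl fun j _ => ?_
  have hprod : ∀ i : ∀ k, Fin (n k), 0 ≤ ∏ k, p k (i k) := fun i =>
    Finset.prod_nonneg fun k _ => (hp k).1 (i k)
  have hterm : ∀ i : ∀ k, Fin (n k), 0 ≤ (∏ k, p k (i k)) * P i j := fun i =>
    mul_nonneg (hprod i) ((hP i).1 j)
  by_cases hw : outDist P p j = 0
  · have hzero : ∀ i ∈ (Finset.univ : Finset (∀ k, Fin (n k))),
        (∏ k, p k (i k)) * P i j = 0 := by
      rw [← Finset.sum_eq_zero_iff_of_nonneg fun i _ => hterm i]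
      exact hw
    rw [hw]
    rw [Finset.sum_eq_zero fun i hi => by rw [hzero i hi, zero_mul],
      Finset.sum_eq_zero fun i hi => ?_, Real.negMulLog_zero, add_zero]
    rw [show (∏ k, p k (i k)) * (P i j * Real.log (P i j))
        = ((∏ k, p k (i k)) * P i j) * Real.log (P i j) from (mul_assoc _ _ _).symm,
      hzero i hi, zero_mul]
  · have key : ∀ i : ∀ k, Fin (n k),
        (∏ k, p k (i k)) * P i j * Real.log (P i j / outDist P p j)
          = (∏ k, p k (i k)) * (P i j * Real.log (P i j))
            - ((∏ k, p k (i k)) * P i j) * Real.log (outDist P p j) := by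
      intro i
      by_cases hx : (∏ k, p k (i k)) * P i j = 0
      · rw [hx, zero_mul, zero_mul]
        rcases mul_eq_zero.mp hx with h | h
        · rw [h, zero_mul, zero_sub, neg_zero]
        · rw [h, Real.log_zero, mul_zero, mul_zero, zero_sub, neg_zero]
      · have hPij : P i j ≠ 0 := fun h => hx (by rw [h, mul_zero])
        rw [Real.log_div hPij hw, mul_sub, mul_assoc]
    simp_rw [key]
    rw [Finset.sum_sub_distrib, ← Finset.sum_mul]
    have : (∑ i : ∀ k, Fin (n k), (∏ k, p k (i k)) * P i j) = outDist P p j := rfl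
    rw [this, Real.negMulLog]
    ring

lemma macDomain_isCompact : IsCompact (macDomain N n) := by
  have h : macDomain N n = Set.pi Set.univ (fun k => stdSimplex ℝ (Fin (n k))) := by
    ext p; simp [macDomain, Set.mem_pi]
  rw [h]
  exact isCompact_univ_pi fun k => isCompact_stdSimplex _ _

lemma macDomain_nonempty (hn : ∀ k, 2 ≤ n k) : (macDomain N n).Nonempty := by
  refine ⟨fun k _ => (n k : ℝ)⁻¹, fun k => ⟨fun _ => by positivity, ?_⟩⟩
  have hk : (n k : ℝ) ≠ 0 := by
    have := hn k; positivity
  simp [Finset.sum_const, Fintype.card_fin, nsmul_eq_mul, mul_inv_cancel₀ hk]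

lemma exists_maximizer (hn : ∀ k, 2 ≤ n k) (P : (∀ k, Fin (n k)) → Fin m → ℝ)
    (hP : IsChannel P) :
    ∃ p ∈ macDomain N n, ∀ r ∈ macDomain N n, mutualInfo P r ≤ mutualInfo P p := by
  obtain ⟨p, hp, hmax⟩ := macDomain_isCompact.exists_isMaxOn (macDomain_nonempty hn)
    (continuous_gfun P).continuousOn
  refine ⟨p, hp, fun r hr => ?_⟩
  rw [mutualInfo_eq_gfun P hP hr, mutualInfo_eq_gfun P hP hp]
  exact hmax hr
end Cont


section Reduce
variable {N m : ℕ} {n : Fin N → ℕ}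

lemma reduce_user (P : (∀ k, Fin (n k)) → Fin m → ℝ) (hP : IsChannel P) (k : Fin N)
    (s : ℕ) :
    ∀ p, p ∈ macDomain N n → (∀ r ∈ macDomain N n, mutualInfo P r ≤ mutualInfo P p) →
      (Finset.univ.filter fun a => p k a ≠ 0).card ≤ s →
      ∃ p', p' ∈ macDomain N n ∧ (∀ r ∈ macDomain N n, mutualInfo P r ≤ mutualInfo P p') ∧
        (∀ l, l ≠ k → p' l = p l) ∧ (Finset.univ.filter fun a => p' k a ≠ 0).card ≤ m := by
  induction s with
  | zero =>
    intro p hp hmax hcard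
    exact ⟨p, hp, hmax, fun l _ => rfl, by omega⟩
  | succ s ih =>
    intro p hp hmax hcard
    by_cases hsmall : (Finset.univ.filter fun a => p k a ≠ 0).card ≤ m
    · exact ⟨p, hp, hmax, fun l _ => rfl, hsmall⟩
    · push_neg at hsmall
      set supp := Finset.univ.filter fun a => p k a ≠ 0 with hsuppdef
      obtain ⟨d, hd0, hdsupp, hdker⟩ :=
        exists_kernel_vec (fun j a => coefA P p k a j) supp hsmall
      have hsumA : ∀ a, ∑ j, coefA P p k a j = 1 :=
        sum_coefA P hP p (fun l => (hp l).2) k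
      have hdsum : ∑ a, d a = 0 := by
        have h1 : ∑ a, d a = ∑ a, ∑ j, d a * coefA P p k a j := by
          refine Finset.sum_congr rfl fun a _ => ?_
          rw [← Finset.mul_sum, hsumA a, mul_one]
        rw [h1, Finset.sum_comm]
        exact Finset.sum_eq_zero fun j _ => hdker j
      obtain ⟨e, he0, hesupp, heker, hesum, hec⟩ :
          ∃ e : Fin (n k) → ℝ, e ≠ 0 ∧ (∀ a ∉ supp, e a = 0) ∧
            (∀ j, ∑ a, e a * coefA P p k a j = 0) ∧ (∑ a, e a = 0) ∧
            0 ≤ ∑ a, e a * Jfun P p k a := by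
        rcases le_total 0 (∑ a, d a * Jfun P p k a) with hc | hc
        · exact ⟨d, hd0, hdsupp, hdker, hdsum, hc⟩
        · refine ⟨-d, neg_ne_zero.mpr hd0, fun a ha => by simp [hdsupp a ha],
            fun j => ?_, ?_, ?_⟩
          · have := hdker j
            simp only [Pi.neg_apply, neg_mul, Finset.sum_neg_distrib]
            linarith
          · simp only [Pi.neg_apply, Finset.sum_neg_distrib]
            linarith
          · simp only [Pi.neg_apply, neg_mul, Finset.sum_neg_distrib]
            linarith
      have hneg : ∃ a, e a < 0 := by
        by_contra hnone
        push_neg at hnone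
        apply he0
        funext a
        exact (Finset.sum_eq_zero_iff_of_nonneg fun b _ => hnone b).mp hesum a
          (Finset.mem_univ a)
      have hnegne : (Finset.univ.filter fun a => e a < 0).Nonempty := by
        obtain ⟨a, ha⟩ := hneg
        exact ⟨a, Finset.mem_filter.mpr ⟨Finset.mem_univ a, ha⟩⟩
      obtain ⟨a₀, ha₀mem, ha₀min⟩ :=
        Finset.exists_min_image _ (fun a => p k a / (-e a)) hnegne
      have ha₀neg : e a₀ < 0 := (Finset.mem_filter.mp ha₀mem).2
      have ha₀supp : a₀ ∈ supp := by
        by_contra h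
        exact absurd (hesupp a₀ h) (ne_of_lt ha₀neg)
      have hpk : ∀ a, 0 ≤ p k a := (hp k).1
      have hpa₀ : 0 < p k a₀ :=
        lt_of_le_of_ne (hpk a₀) (Ne.symm (Finset.mem_filter.mp ha₀supp).2)
      set t₀ := p k a₀ / (-e a₀) with ht₀def
      have ht₀pos : 0 < t₀ := div_pos hpa₀ (by linarith)
      set q : Fin (n k) → ℝ := fun a => p k a + t₀ * e a with hqdef
      have hqnonneg : ∀ a, 0 ≤ q a := by
        intro a
        by_cases hea : e a < 0
        · have hmin := ha₀min a (Finset.mem_filter.mpr ⟨Finset.mem_univ a, hea⟩)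
          have h2 : t₀ * (-e a) ≤ p k a :=
            (le_div_iff₀ (by linarith : (0:ℝ) < -e a)).mp hmin
          have h3 : t₀ * e a = -(t₀ * (-e a)) := by ring
          simp only [hqdef]
          linarith
        · simp only [hqdef]
          exact add_nonneg (hpk a) (mul_nonneg ht₀pos.le (by linarith [not_lt.mp hea]))
      have hqsum : ∑ a, q a = 1 := by
        simp only [hqdef]
        rw [Finset.sum_add_distrib, ← Finset.mul_sum, hesum, mul_zero, add_zero]
        exact (hp k).2
      have hmem : Function.update p k q ∈ macDomain N n := by
        intro l
        by_cases hl : l = k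
        · subst hl
          rw [Function.update_self]
          exact ⟨hqnonneg, hqsum⟩
        · rw [Function.update_of_ne hl]
          exact hp l
      have hbase : ∀ j, outDist P p j = ∑ a, p k a * coefA P p k a j := by
        intro j
        have := outDist_update P p k (p k) j
        rwa [Function.update_eq_self] at this
      have hout : ∀ j, outDist P (Function.update p k q) j = outDist P p j := by
        intro j
        rw [outDist_update]
        have hexp : ∑ a, q a * coefA P p k a j
            = ∑ a, p k a * coefA P p k a j + t₀ * ∑ a, e a * coefA P p k a j := by
          rw [Finset.mul_sum, ← Finset.sum_add_distrib]
          refine Finset.sum_congr rfl fun a _ => ?_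
          simp only [hqdef]
          ring
        rw [hexp, heker j, mul_zero, add_zero, hbase]
      have hMI : mutualInfo P p ≤ mutualInfo P (Function.update p k q) := by
        rw [mutualInfo_update P p k q hout, mutualInfo_eq_sum_Jfun P p k]
        have hexp : ∑ a, q a * Jfun P p k a
            = ∑ a, p k a * Jfun P p k a + t₀ * ∑ a, e a * Jfun P p k a := by
          rw [Finset.mul_sum, ← Finset.sum_add_distrib]
          refine Finset.sum_congr rfl fun a _ => ?_
          simp only [hqdef]
          ring
        rw [hexp]
        nlinarith [mul_nonneg ht₀pos.le hec]
      have hmax' : ∀ r ∈ macDomain N n, mutualInfo P r ≤ mutualInfo P (Function.update p k q) :=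
        fun r hr => (hmax r hr).trans hMI
      have hea₀ : e a₀ ≠ 0 := ne_of_lt ha₀neg
      have hqa₀ : q a₀ = 0 := by
        have ht : t₀ * e a₀ = -(p k a₀) := by
          rw [ht₀def]
          field_simp
        simp only [hqdef]
        rw [ht]
        ring
      have hsub : (Finset.univ.filter fun a => q a ≠ 0) ⊆ supp.erase a₀ := by
        intro a ha
        have hqa : q a ≠ 0 := (Finset.mem_filter.mp ha).2
        refine Finset.mem_erase.mpr ⟨?_, ?_⟩
        · intro h
          rw [h] at hqa
          exact hqa hqa₀
        · by_contra h
          have hpa : p k a = 0 := by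
            by_contra hpa
            exact h (Finset.mem_filter.mpr ⟨Finset.mem_univ a, hpa⟩)
          exact hqa (by simp [hqdef, hpa, hesupp a h])
      have hcard' : (Finset.univ.filter fun a => q a ≠ 0).card ≤ s := by
        have h1 := Finset.card_le_card hsub
        have h2 : (supp.erase a₀).card = supp.card - 1 := Finset.card_erase_of_mem ha₀supp
        omega
      obtain ⟨p', hp', hmax'', heq, hcardp'⟩ := ih (Function.update p k q) hmem hmax'
        (by simpa using hcard')
      refine ⟨p', hp', hmax'', fun l hl => ?_, hcardp'⟩
      rw [heq l hl, Function.update_of_ne hl]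

lemma reduce_all (P : (∀ k, Fin (n k)) → Fin m → ℝ) (hP : IsChannel P)
    (S : Finset (Fin N)) :
    ∀ p ∈ macDomain N n, (∀ r ∈ macDomain N n, mutualInfo P r ≤ mutualInfo P p) →
      ∃ p' ∈ macDomain N n, (∀ r ∈ macDomain N n, mutualInfo P r ≤ mutualInfo P p') ∧
        ∀ k ∈ S, (Finset.univ.filter fun a => p' k a ≠ 0).card ≤ m := by
  induction S using Finset.induction_on with
  | empty =>
    intro p hp hmax
    exact ⟨p, hp, hmax, by simp⟩
  | @insert k S hk ih =>
    intro p hp hmax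
    obtain ⟨p₁, hp₁, hmax₁, hS⟩ := ih p hp hmax
    obtain ⟨p₂, hp₂, hmax₂, heq, hcard⟩ :=
      reduce_user P hP k _ p₁ hp₁ hmax₁ le_rfl
    refine ⟨p₂, hp₂, hmax₂, fun l hl => ?_⟩
    by_cases hlk : l = k
    · subst hlk; exact hcard
    · rw [heq l hlk]
      exact hS l ((Finset.mem_insert.mp hl).resolve_left hlk)

end Reduce


/-- Main theorem (reduction to elementary MACs): the capacity of an N-user
`(n₁,...,n_N;m)`-MAC is attained on some member of the elementary face set
`Φ_N^(m)`: there is an optimal input distribution `p̄` together with faces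
`Λ k` of the input simplices, where `Λ k` has `m` vertices when `n_k ≥ m` and is
the whole simplex when `n_k < m`, such that each `p̄_k` is supported on `Λ k`.
In particular, for every user `k` with `n_k ≥ m` some optimal distribution uses
at most `m` input symbols. -/
theorem capacity_attained_on_elementary_face {N m : ℕ} {n : Fin N → ℕ}
    (hn : ∀ k, 2 ≤ n k) (hm : 2 ≤ m)
    (P : (∀ k, Fin (n k)) → Fin m → ℝ) (hP : IsChannel P) :
    ∃ pbar ∈ macDomain N n,
      (∀ p ∈ macDomain N n, mutualInfo P p ≤ mutualInfo P pbar) ∧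
      ∃ Λ : ∀ k, Finset (Fin (n k)),
        (∀ k, (Λ k).card = min (n k) m) ∧
        (∀ k, ∀ i ∉ Λ k, pbar k i = 0) := by
  classical
  obtain ⟨p₀, hp₀, hmax₀⟩ := exists_maximizer hn P hP
  obtain ⟨pbar, hpbar, hmaxbar, hsupp⟩ := reduce_all P hP Finset.univ p₀ hp₀ hmax₀
  have hΛ : ∀ k, ∃ t : Finset (Fin (n k)),
      (Finset.univ.filter fun a => pbar k a ≠ 0) ⊆ t ∧ t.card = min (n k) m := by
    intro k
    refine Finset.exists_superset_card_eq ?_ ?_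
    · refine le_min ?_ (hsupp k (Finset.mem_univ k))
      calc (Finset.univ.filter fun a => pbar k a ≠ 0).card
          ≤ (Finset.univ : Finset (Fin (n k))).card := Finset.card_filter_le _ _
        _ = n k := by rw [Finset.card_univ, Fintype.card_fin]
    · rw [Fintype.card_fin]
      exact min_le_left _ _
  choose Λ hΛ1 hΛ2 using hΛ
  refine ⟨pbar, hpbar, hmaxbar, Λ, hΛ2, fun k i hi => ?_⟩
  by_contra h
  exact hi (hΛ1 k (Finset.mem_filter.mpr ⟨Finset.mem_univ i, h⟩))
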